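/- Let ε* > ε₀ > 0 and suppose that on [ε₀, ε*) we are given continuous functions x(ε), y(ε) ∈ ℂ^n with ‖x(ε)‖₂ = ‖y(ε)‖₂ = 1 and r(ε) := y(ε)^H x(ε) real and positive, and a continuous B(ε) ∈ ℂ^{n×n} with x(ε)^H B(ε) = 0 and B(ε)y(ε) = 0. Define Π(ε) = I − x(ε)y(ε)^H/r(ε), G(ε) = Π(ε)B(ε)Π(ε), and S(ε) = y y^H G^H + G^H x x^H. Assume that as ε ↗ ε* one has r(ε) → 0, x(ε) → x_*, y(ε) → y_*, and B(ε) → B_*, set C_* = y_*^H B_* x_*, and assume further that r is differentiable with r'(ε) = −r(ε)‖S(ε)‖_F for all ε ∈ [ε₀, ε*). Then lim_{ε ↗ ε*} r(ε) r'(ε) = −2|C_*|. -/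

import Mathlib

open Matrix Filter

/-- Frobenius inner product `⟨A,B⟩ = trace(Aᴴ B)`. -/
noncomputable def frobInner {n : ℕ} (A B : Matrix (Fin n) (Fin n) ℂ) : ℂ :=
  (Aᴴ * B).trace

/-- Frobenius norm `‖A‖_F = √⟨A,A⟩`. -/
noncomputable def frobNorm {n : ℕ} (A : Matrix (Fin n) (Fin n) ℂ) : ℝ :=
  Real.sqrt (frobInner A A).re

/-- The matrix `S = y yᴴ Gᴴ + Gᴴ x xᴴ`. -/
noncomputable def Smat {n : ℕ} (x y : Fin n → ℂ) (G : Matrix (Fin n) (Fin n) ℂ) :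
    Matrix (Fin n) (Fin n) ℂ :=
  vecMulVec y (star y) * Gᴴ + Gᴴ * vecMulVec x (star x)

/-- `G(ε) = Π(ε) B(ε) Π(ε)` where `Π = I − x yᴴ/r`. -/
noncomputable def Gof {n : ℕ} (x y : Fin n → ℂ) (r : ℝ) (B : Matrix (Fin n) (Fin n) ℂ) :
    Matrix (Fin n) (Fin n) ℂ :=
  ((1 : Matrix (Fin n) (Fin n) ℂ) - ((r : ℂ))⁻¹ • vecMulVec x (star y)) * B *
    ((1 : Matrix (Fin n) (Fin n) ℂ) - ((r : ℂ))⁻¹ • vecMulVec x (star y))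

variable {n : ℕ}

lemma vmv_mul (a b : Fin n → ℂ) (M : Matrix (Fin n) (Fin n) ℂ) :
    vecMulVec a b * M = vecMulVec a (b ᵥ* M) := by
  ext i j
  simp only [mul_apply, vecMulVec_apply, vecMul, dotProduct, Finset.mul_sum]
  exact Finset.sum_congr rfl fun k _ => by ring

lemma mul_vmv (a b : Fin n → ℂ) (M : Matrix (Fin n) (Fin n) ℂ) :
    M * vecMulVec a b = vecMulVec (M *ᵥ a) b := by
  ext i j
  simp only [mul_apply, vecMulVec_apply, mulVec, dotProduct, Finset.sum_mul]
  exact Finset.sum_congr rfl fun k _ => by ring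

lemma vmv_vmv (a b c d : Fin n → ℂ) :
    vecMulVec a b * vecMulVec c d = (b ⬝ᵥ c) • vecMulVec a d := by
  ext i j
  simp only [mul_apply, vecMulVec_apply, dotProduct, Matrix.smul_apply, smul_eq_mul, Finset.sum_mul]
  exact Finset.sum_congr rfl fun k _ => by ring

lemma vmv_ct (a b : Fin n → ℂ) :
    (vecMulVec a b)ᴴ = vecMulVec (star b) (star a) := by
  ext i j
  simp [conjTranspose_apply, vecMulVec_apply, mul_comm]

lemma vmv_mulVec (a b v : Fin n → ℂ) : vecMulVec a b *ᵥ v = (b ⬝ᵥ v) • a := by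
  ext i
  simp only [mulVec, dotProduct, vecMulVec_apply, Pi.smul_apply, smul_eq_mul, Finset.sum_mul,
    Finset.mul_sum]
  exact Finset.sum_congr rfl fun k _ => by ring

lemma smul_vmv (t : ℂ) (a b : Fin n → ℂ) : vecMulVec (t • a) b = t • vecMulVec a b := by
  ext i j
  simp [vecMulVec_apply, mul_assoc]

lemma key_alg (x y : Fin n → ℂ) (r : ℝ) (B : Matrix (Fin n) (Fin n) ℂ)
    (hrpos : 0 < r) (hxy : star y ⬝ᵥ x = (r:ℂ))
    (hxnorm : star x ⬝ᵥ x = 1) (hynorm : star y ⬝ᵥ y = 1)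
    (hxB : star x ᵥ* B = 0) (hBy : B *ᵥ y = 0) :
    ((r:ℂ))^2 • Smat x y (Gof x y r B) =
      (-(r:ℂ)) • (vecMulVec y (star (B *ᵥ x)) + vecMulVec (Bᴴ *ᵥ y) (star x))
      + (2 * (starRingEnd ℂ) (star y ⬝ᵥ (B *ᵥ x))) • vecMulVec y (star x) := by
  have hc : (r:ℂ) ≠ 0 := by exact_mod_cast ne_of_gt hrpos
  set c : ℂ := ((r:ℂ))⁻¹ with hcdef
  set C : ℂ := star y ⬝ᵥ (B *ᵥ x) with hCdef
  set w : Fin n → ℂ := star y ᵥ* B with hwdef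
  have hwC : w ⬝ᵥ x = C := (dotProduct_mulVec _ _ _).symm
  have hG : Gof x y r B = B - c • vecMulVec (B *ᵥ x) (star y) - c • vecMulVec x w
      + (c*c*C) • vecMulVec x (star y) := by
    unfold Gof
    rw [← hcdef]
    simp only [sub_mul, mul_sub, one_mul, mul_one, smul_mul_assoc, mul_smul_comm,
      vmv_mul, mul_vmv, vmv_vmv, vmv_mulVec, smul_vmv, smul_smul, ← hwdef, hwC]
    module
  have hstarc : star c = c := by
    rw [hcdef, star_inv₀, RCLike.star_def, Complex.conj_ofReal]
  have hstarw : star w = Bᴴ *ᵥ y := by rw [hwdef, star_vecMul, star_star]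
  have hGH : (Gof x y r B)ᴴ = Bᴴ - c • vecMulVec y (star (B *ᵥ x))
      - c • vecMulVec (Bᴴ *ᵥ y) (star x) + (c * c * star C) • vecMulVec y (star x) := by
    rw [hG]
    simp only [conjTranspose_sub, conjTranspose_add, conjTranspose_smul, vmv_ct, star_star,
      hstarw, star_mul', hstarc]
    all_goals module
  have h1 : star y ᵥ* Bᴴ = 0 := by rw [← star_mulVec, hBy, star_zero]
  have h2 : star y ⬝ᵥ (Bᴴ *ᵥ y) = 0 := by rw [dotProduct_mulVec, h1, zero_dotProduct]
  have h3 : Bᴴ *ᵥ x = 0 := by rw [mulVec_conjTranspose, hxB, star_zero]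
  have h4 : star (B *ᵥ x) ⬝ᵥ x = 0 := by
    rw [star_mulVec, ← dotProduct_mulVec, h3, dotProduct_zero]
  have hvz : ∀ b : Fin n → ℂ, vecMulVec (0 : Fin n → ℂ) b = 0 := by
    intro b; ext i j; simp [vecMulVec_apply]
  have hQG : vecMulVec y (star y) * (Gof x y r B)ᴴ
      = (-c) • vecMulVec y (star (B *ᵥ x)) + (c * c * star C) • vecMulVec y (star x) := by
    rw [hGH]
    simp only [mul_sub, mul_add, mul_smul_comm]
    rw [vmv_mul y (star y) Bᴴ, h1]
    simp only [vmv_vmv, h2, hynorm, zero_smul, one_smul]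
    rw [show vecMulVec y (0 : Fin n → ℂ) = 0 by ext i j; simp [vecMulVec_apply]]
    module
  have hGR : (Gof x y r B)ᴴ * vecMulVec x (star x)
      = (-c) • vecMulVec (Bᴴ *ᵥ y) (star x) + (c * c * star C) • vecMulVec y (star x) := by
    rw [hGH]
    simp only [sub_mul, add_mul, smul_mul_assoc]
    rw [show Bᴴ * vecMulVec x (star x) = vecMulVec (Bᴴ *ᵥ x) (star x) from mul_vmv _ _ _,
      h3, hvz]
    simp only [vmv_vmv, h4, hxnorm, zero_smul, one_smul]
    module
  have hco1 : ((r:ℂ))^2 * (-c) = -(r:ℂ) := by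
    rw [hcdef]; field_simp
  have hco2 : ((r:ℂ))^2 * (c * c * star C) = star C := by
    rw [hcdef]; field_simp
  rw [show Smat x y (Gof x y r B) = vecMulVec y (star y) * (Gof x y r B)ᴴ
      + (Gof x y r B)ᴴ * vecMulVec x (star x) from rfl, hQG, hGR]
  simp only [smul_add, smul_smul, hco1, hco2, starRingEnd_apply, ← hCdef]
  module


lemma frobNorm_eq (A : Matrix (Fin n) (Fin n) ℂ) :
    frobNorm A = Real.sqrt (∑ i, ∑ j, Complex.normSq (A i j)) := by
  unfold frobNorm
  congr 1
  have h : frobInner A A = ((∑ i, ∑ j, Complex.normSq (A i j) : ℝ) : ℂ) := by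
    unfold frobInner
    push_cast
    simp only [Matrix.trace, diag_apply, mul_apply, conjTranspose_apply]
    rw [Finset.sum_comm]
    refine Finset.sum_congr rfl fun i _ => Finset.sum_congr rfl fun j _ => ?_
    rw [mul_comm, ← starRingEnd_apply, Complex.mul_conj]
  rw [h, Complex.ofReal_re]

lemma frobNorm_smul (t : ℂ) (A : Matrix (Fin n) (Fin n) ℂ) :
    frobNorm (t • A) = ‖t‖ * frobNorm A := by
  rw [frobNorm_eq, frobNorm_eq]
  simp only [Matrix.smul_apply, smul_eq_mul, Complex.normSq_mul, ← Finset.mul_sum]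
  rw [Real.sqrt_mul (Complex.normSq_nonneg t), ← Complex.norm_def]

lemma normSq_star (z : ℂ) : Complex.normSq (star z) = Complex.normSq z := by
  rw [← starRingEnd_apply]; exact Complex.normSq_conj z

lemma abs_star' (z : ℂ) : ‖star z‖ = ‖z‖ := by
  rw [← starRingEnd_apply]; exact Complex.norm_conj z


theorem stmt17 {n : ℕ} (ε₀ εs : ℝ) (hε₀ : 0 < ε₀) (hεs : ε₀ < εs)
    (x y : ℝ → (Fin n → ℂ)) (B : ℝ → Matrix (Fin n) (Fin n) ℂ)
    (xs ys : Fin n → ℂ) (Bs : Matrix (Fin n) (Fin n) ℂ)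
    (r r' : ℝ → ℝ)
    (hr : ∀ e ∈ Set.Ico ε₀ εs, star (y e) ⬝ᵥ x e = (r e : ℂ) ∧ 0 < r e)
    (hxnorm : ∀ e ∈ Set.Ico ε₀ εs, star (x e) ⬝ᵥ x e = 1)
    (hynorm : ∀ e ∈ Set.Ico ε₀ εs, star (y e) ⬝ᵥ y e = 1)
    (hxB : ∀ e ∈ Set.Ico ε₀ εs, star (x e) ᵥ* B e = 0)
    (hBy : ∀ e ∈ Set.Ico ε₀ εs, B e *ᵥ y e = 0)
    (hxcont : ∀ i, ContinuousOn (fun e => x e i) (Set.Ico ε₀ εs))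
    (hycont : ∀ i, ContinuousOn (fun e => y e i) (Set.Ico ε₀ εs))
    (hBcont : ∀ i j, ContinuousOn (fun e => B e i j) (Set.Ico ε₀ εs))
    (hrlim : Tendsto r (nhdsWithin εs (Set.Ico ε₀ εs)) (nhds 0))
    (hxlim : ∀ i, Tendsto (fun e => x e i) (nhdsWithin εs (Set.Ico ε₀ εs)) (nhds (xs i)))
    (hylim : ∀ i, Tendsto (fun e => y e i) (nhdsWithin εs (Set.Ico ε₀ εs)) (nhds (ys i)))
    (hBlim : ∀ i j, Tendsto (fun e => B e i j) (nhdsWithin εs (Set.Ico ε₀ εs)) (nhds (Bs i j)))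
    (hrdiff : ∀ e ∈ Set.Ico ε₀ εs, HasDerivAt r (r' e) e)
    (hr' : ∀ e ∈ Set.Ico ε₀ εs,
      r' e = -(r e) * frobNorm (Smat (x e) (y e) (Gof (x e) (y e) (r e) (B e)))) :
    Tendsto (fun e => r e * r' e) (nhdsWithin εs (Set.Ico ε₀ εs))
      (nhds (-2 * ‖star ys ⬝ᵥ (Bs *ᵥ xs)‖)) := by
  set l := nhdsWithin εs (Set.Ico ε₀ εs) with hldef
  haveI hne : l.NeBot := by
    rw [hldef]
    apply mem_closure_iff_nhdsWithin_neBot.mp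
    rw [closure_Ico hεs.ne]
    exact Set.right_mem_Icc.mpr hεs.le
  have hmem : ∀ᶠ e in l, e ∈ Set.Ico ε₀ εs := eventually_mem_nhdsWithin
  set Cs : ℂ := star ys ⬝ᵥ (Bs *ᵥ xs) with hCs
  -- entrywise limits of building blocks
  have hBxl : ∀ j, Tendsto (fun e => (B e *ᵥ x e) j) l (nhds ((Bs *ᵥ xs) j)) := by
    intro j
    simp only [mulVec, dotProduct]
    exact tendsto_finset_sum _ fun k _ => (hBlim j k).mul (hxlim k)
  have hBHyl : ∀ i, Tendsto (fun e => ((B e)ᴴ *ᵥ y e) i) l (nhds ((Bsᴴ *ᵥ ys) i)) := by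
    intro i
    simp only [mulVec, dotProduct, conjTranspose_apply]
    exact tendsto_finset_sum _ fun k _ => ((hBlim k i).star).mul (hylim k)
  have hCl : Tendsto (fun e => star (y e) ⬝ᵥ (B e *ᵥ x e)) l (nhds Cs) := by
    simp only [dotProduct, Pi.star_apply, hCs]
    exact tendsto_finset_sum _ fun k _ => ((hylim k).star).mul (hBxl k)
  have hrel : Tendsto (fun e => ((r e : ℝ) : ℂ)) l (nhds (0:ℂ)) := by
    have := (Complex.continuous_ofReal.tendsto 0).comp hrlim
    rw [Complex.ofReal_zero] at this; exact this
  -- unit norms of limits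
  have hxs1 : ∑ i, Complex.normSq (xs i) = 1 := by
    have h1 : Tendsto (fun e => star (x e) ⬝ᵥ x e) l (nhds (star xs ⬝ᵥ xs)) := by
      simp only [dotProduct, Pi.star_apply]
      exact tendsto_finset_sum _ fun k _ => ((hxlim k).star).mul (hxlim k)
    have h2 : (fun e => star (x e) ⬝ᵥ x e) =ᶠ[l] fun _ => (1:ℂ) :=
      hmem.mono fun e he => hxnorm e he
    have h3 : star xs ⬝ᵥ xs = 1 := tendsto_nhds_unique (Tendsto.congr' h2 h1) tendsto_const_nhds
    have h4 : star xs ⬝ᵥ xs = ((∑ i, Complex.normSq (xs i) : ℝ) : ℂ) := by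
      push_cast
      simp only [dotProduct, Pi.star_apply]
      exact Finset.sum_congr rfl fun i _ => by
        rw [mul_comm, ← starRingEnd_apply, Complex.mul_conj]
    rw [h4] at h3
    exact_mod_cast h3
  have hys1 : ∑ i, Complex.normSq (ys i) = 1 := by
    have h1 : Tendsto (fun e => star (y e) ⬝ᵥ y e) l (nhds (star ys ⬝ᵥ ys)) := by
      simp only [dotProduct, Pi.star_apply]
      exact tendsto_finset_sum _ fun k _ => ((hylim k).star).mul (hylim k)
    have h2 : (fun e => star (y e) ⬝ᵥ y e) =ᶠ[l] fun _ => (1:ℂ) :=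
      hmem.mono fun e he => hynorm e he
    have h3 : star ys ⬝ᵥ ys = 1 := tendsto_nhds_unique (Tendsto.congr' h2 h1) tendsto_const_nhds
    have h4 : star ys ⬝ᵥ ys = ((∑ i, Complex.normSq (ys i) : ℝ) : ℂ) := by
      push_cast
      simp only [dotProduct, Pi.star_apply]
      exact Finset.sum_congr rfl fun i _ => by
        rw [mul_comm, ← starRingEnd_apply, Complex.mul_conj]
    rw [h4] at h3
    exact_mod_cast h3
  -- the rescaled matrix and its limit
  set T : ℝ → Matrix (Fin n) (Fin n) ℂ :=
    fun e => ((r e : ℂ))^2 • Smat (x e) (y e) (Gof (x e) (y e) (r e) (B e)) with hT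
  set L : Matrix (Fin n) (Fin n) ℂ := (2 * star Cs) • vecMulVec ys (star xs) with hL
  have hTent : ∀ i j, Tendsto (fun e => T e i j) l (nhds (L i j)) := by
    intro i j
    have heq : (fun e => T e i j) =ᶠ[l]
        (fun e => -(((r e : ℝ)):ℂ) * ((y e i) * star ((B e *ᵥ x e) j)
          + ((B e)ᴴ *ᵥ (y e)) i * star (x e j))
          + 2 * star (star (y e) ⬝ᵥ (B e *ᵥ x e)) * (y e i * star (x e j))) := by
      filter_upwards [hmem] with e he
      have hk := key_alg (x e) (y e) (r e) (B e) (hr e he).2 (hr e he).1 (hxnorm e he)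
        (hynorm e he) (hxB e he) (hBy e he)
      rw [hT]
      show ((((r e : ℝ)):ℂ)^2 • Smat (x e) (y e) (Gof (x e) (y e) (r e) (B e))) i j = _
      rw [hk]
      simp only [Matrix.add_apply, Matrix.smul_apply, vecMulVec_apply, neg_smul, Matrix.neg_apply,
        Pi.star_apply, smul_eq_mul, starRingEnd_apply, Pi.add_apply]
      ring
    refine Tendsto.congr' heq.symm ?_
    have hlim : Tendsto (fun e => -(((r e : ℝ)):ℂ) * ((y e i) * star ((B e *ᵥ x e) j)
          + ((B e)ᴴ *ᵥ (y e)) i * star (x e j))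
          + 2 * star (star (y e) ⬝ᵥ (B e *ᵥ x e)) * (y e i * star (x e j))) l
        (nhds (-(0:ℂ) * ((ys i) * star ((Bs *ᵥ xs) j) + (Bsᴴ *ᵥ ys) i * star (xs j))
          + 2 * star Cs * (ys i * star (xs j)))) := by
      exact (Tendsto.mul hrel.neg (((hylim i).mul (hBxl j).star).add
        ((hBHyl i).mul (hxlim j).star))).add
        ((tendsto_const_nhds.mul hCl.star).mul ((hylim i).mul (hxlim j).star))
    have : -(0:ℂ) * ((ys i) * star ((Bs *ᵥ xs) j) + (Bsᴴ *ᵥ ys) i * star (xs j))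
          + 2 * star Cs * (ys i * star (xs j)) = L i j := by
      rw [hL]
      simp only [Matrix.smul_apply, vecMulVec_apply, Pi.star_apply, smul_eq_mul]
      ring
    rwa [this] at hlim
  -- limit of frobNorm ∘ T
  have hfrob : Tendsto (fun e => frobNorm (T e)) l
      (nhds (Real.sqrt (∑ i, ∑ j, Complex.normSq (L i j)))) := by
    simp only [frobNorm_eq]
    exact (Real.continuous_sqrt.tendsto _).comp
      (tendsto_finset_sum _ fun i _ => tendsto_finset_sum _ fun j _ =>
        (Complex.continuous_normSq.tendsto _).comp (hTent i j))
  have hval : Real.sqrt (∑ i, ∑ j, Complex.normSq (L i j)) = 2 * ‖Cs‖ := by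
    have hsum : ∑ i, ∑ j, Complex.normSq (L i j)
        = Complex.normSq (2 * star Cs) * ((∑ i, Complex.normSq (ys i)) *
            (∑ j, Complex.normSq (xs j))) := by
      rw [Finset.sum_mul_sum, Finset.mul_sum]
      refine Finset.sum_congr rfl fun i _ => ?_
      rw [Finset.mul_sum]
      refine Finset.sum_congr rfl fun j _ => ?_
      rw [hL]
      simp only [Matrix.smul_apply, vecMulVec_apply, Pi.star_apply, smul_eq_mul, Complex.normSq_mul,
        normSq_star]
    rw [hsum, hxs1, hys1, mul_one, mul_one, ← Complex.norm_def, norm_mul,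
      abs_star', Complex.norm_two]
  have heq2 : (fun e => r e * r' e) =ᶠ[l] fun e => - frobNorm (T e) := by
    filter_upwards [hmem] with e he
    rw [hr' e he]
    have hpos := (hr e he).2
    have hsc : frobNorm (T e)
        = (r e)^2 * frobNorm (Smat (x e) (y e) (Gof (x e) (y e) (r e) (B e))) := by
      rw [hT]
      simp only [frobNorm_smul, norm_pow, Complex.norm_real, Real.norm_eq_abs, abs_of_pos hpos]
    rw [hsc]
    ring
  have hfinal : Tendsto (fun e => -frobNorm (T e)) l (nhds (-(2 * ‖Cs‖))) := by
    rw [← hval]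
    exact hfrob.neg
  rw [neg_mul]
  exact Tendsto.congr' heq2.symm hfinal
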